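/- arXiv:2510.21979 — 2 statements merged into one kernel-verified Lean document; each statement's English description precedes it below -/
import Mathlib

section
/- Let G be a finite group and p a prime such that the Sylow p-subgroups of G are cyclic of order p. Let U be a Sylow p-subgroup of G and suppose there are exactly n conjugacy classes in G consisting of elements of order p. Then each such conjugacy class meets U in exactly (p-1)/n elements. -/
open Subgroup

section Aux

variable {G : Type*} [Group G] [Finite G] {p : ℕ} [Fact p.Prime]

lemma aux_orderOf_eq_p {U : Subgroup G} (hU : Nat.card U = p)
    {u : G} (hu : u ∈ U) (hu1 : u ≠ 1) : orderOf u = p := by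
  have hdvd : orderOf u ∣ p := hU ▸ U.orderOf_dvd_natCard hu
  rcases (Nat.Prime.eq_one_or_self_of_dvd (Fact.out) _ hdvd) with h | h
  · exact absurd (orderOf_eq_one_iff.mp h) hu1
  · exact h

lemma aux_zpowers_eq {U : Subgroup G} (hU : Nat.card U = p)
    {u : G} (hu : u ∈ U) (hu1 : u ≠ 1) : Subgroup.zpowers u = U := by
  refine Subgroup.eq_of_le_of_card_ge ((Subgroup.zpowers_le).mpr hu) ?_
  rw [hU, Nat.card_zpowers, aux_orderOf_eq_p hU hu hu1]

lemma aux_conj_transfer {U : Subgroup G} (hU : Nat.card U = p) {u u' : G}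
    (hu : u ∈ U) (hu1 : u ≠ 1) (hu' : u' ∈ U) {g₁ g₂ : G}
    (h : g₁ * u * g₁⁻¹ = g₂ * u * g₂⁻¹) : g₁ * u' * g₁⁻¹ = g₂ * u' * g₂⁻¹ := by
  obtain ⟨k, hk⟩ : u' ∈ Subgroup.zpowers u := (aux_zpowers_eq hU hu hu1) ▸ hu'
  have e : ∀ g : G, g * u ^ k * g⁻¹ = (g * u * g⁻¹) ^ k := by
    intro g
    simpa [MulAut.conj_apply] using (map_zpow (MulAut.conj g) u k).symm
  rw [← hk, e, e, h]

noncomputable def conjEl {u v : G} (h : IsConj u v) : G := (isConj_iff.mp h).choose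

lemma conjEl_spec {u v : G} (h : IsConj u v) : conjEl h * u * (conjEl h)⁻¹ = v :=
  (isConj_iff.mp h).choose_spec

variable (U : Sylow p G) (hU : Nat.card U = p)

noncomputable def fibMap {u u' : G}
    (hu : u ∈ (U : Subgroup G)) (hp : orderOf u = p) (hu' : u' ∈ (U : Subgroup G))
    (v : {g : G // g ∈ (U : Subgroup G) ∧ ConjClasses.mk g = ConjClasses.mk u}) :
    {g : G // g ∈ (U : Subgroup G) ∧ ConjClasses.mk g = ConjClasses.mk u'} := by
  have hu1 : u ≠ 1 := by
    intro h; rw [h, orderOf_one] at hp; exact (Fact.out : p.Prime).one_lt.ne hp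
  have hconj : IsConj u v.1 := ConjClasses.mk_eq_mk_iff_isConj.mp v.2.2.symm
  refine ⟨conjEl hconj * u' * (conjEl hconj)⁻¹, ?_, ?_⟩
  · obtain ⟨k, hk⟩ : u' ∈ Subgroup.zpowers u := (aux_zpowers_eq hU hu hu1) ▸ hu'
    have e : conjEl hconj * u ^ k * (conjEl hconj)⁻¹ =
        (conjEl hconj * u * (conjEl hconj)⁻¹) ^ k := by
      simpa [MulAut.conj_apply] using (map_zpow (MulAut.conj (conjEl hconj)) u k).symm
    rw [← hk, e, conjEl_spec hconj]
    exact Subgroup.zpow_mem _ v.2.1 k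
  · exact (ConjClasses.mk_eq_mk_iff_isConj.mpr (isConj_iff.mpr ⟨conjEl hconj, rfl⟩)).symm

lemma fibMap_fibMap {u u' : G}
    (hu : u ∈ (U : Subgroup G)) (hp : orderOf u = p)
    (hu' : u' ∈ (U : Subgroup G)) (hp' : orderOf u' = p)
    (v : {g : G // g ∈ (U : Subgroup G) ∧ ConjClasses.mk g = ConjClasses.mk u}) :
    fibMap U hU hu' hp' hu (fibMap U hU hu hp hu' v) = v := by
  have hu1' : u' ≠ 1 := by
    intro h; rw [h, orderOf_one] at hp'; exact (Fact.out : p.Prime).one_lt.ne hp'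
  have hconj : IsConj u v.1 := ConjClasses.mk_eq_mk_iff_isConj.mp v.2.2.symm
  set w := fibMap U hU hu hp hu' v with hw
  have hconj' : IsConj u' w.1 := ConjClasses.mk_eq_mk_iff_isConj.mp w.2.2.symm
  have hw1 : w.1 = conjEl hconj * u' * (conjEl hconj)⁻¹ := rfl
  have h1 : conjEl hconj' * u' * (conjEl hconj')⁻¹ = conjEl hconj * u' * (conjEl hconj)⁻¹ := by
    rw [conjEl_spec hconj', hw1]
  have h2 : conjEl hconj' * u * (conjEl hconj')⁻¹ = conjEl hconj * u * (conjEl hconj)⁻¹ :=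
    aux_conj_transfer hU hu' hu1' hu h1
  apply Subtype.ext
  show conjEl hconj' * u * (conjEl hconj')⁻¹ = v.1
  rw [h2, conjEl_spec hconj]

noncomputable def fibEquiv {u u' : G}
    (hu : u ∈ (U : Subgroup G)) (hp : orderOf u = p)
    (hu' : u' ∈ (U : Subgroup G)) (hp' : orderOf u' = p) :
    {g : G // g ∈ (U : Subgroup G) ∧ ConjClasses.mk g = ConjClasses.mk u} ≃
    {g : G // g ∈ (U : Subgroup G) ∧ ConjClasses.mk g = ConjClasses.mk u'} :=
  { toFun := fibMap U hU hu hp hu'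
    invFun := fibMap U hU hu' hp' hu
    left_inv := fibMap_fibMap U hU hu hp hu' hp'
    right_inv := fibMap_fibMap U hU hu' hp' hu hp }

lemma aux_orderOf_mk_eq {a b : G} (h : ConjClasses.mk a = ConjClasses.mk b) :
    orderOf a = orderOf b := by
  obtain ⟨g, hg⟩ := isConj_iff.mp (ConjClasses.mk_eq_mk_iff_isConj.mp h)
  have hsc : SemiconjBy g a (g * a * g⁻¹) := by
    show g * a = g * a * g⁻¹ * g; group
  rw [← hg]
  exact hsc.orderOf_eq g

end Aux

theorem conjClass_meets_sylow (G : Type*) [Group G] [Finite G] (p : ℕ) [Fact p.Prime]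
    (U : Sylow p G) (hU : Nat.card U = p) (n : ℕ)
    (hn : Nat.card {c : ConjClasses G // ∃ g : G, c = ConjClasses.mk g ∧ orderOf g = p} = n)
    (c : ConjClasses G) (hc : ∃ g : G, c = ConjClasses.mk g ∧ orderOf g = p) :
    Nat.card {g : G // g ∈ (U : Subgroup G) ∧ ConjClasses.mk g = c} = (p - 1) / n := by
  classical
  have hp : p.Prime := Fact.out
  have := Fintype.ofFinite G
  -- every class of order-p elements has a representative in U
  have hrep : ∀ c₀ : ConjClasses G, (∃ g : G, c₀ = ConjClasses.mk g ∧ orderOf g = p) →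
      ∃ u : G, u ∈ (U : Subgroup G) ∧ orderOf u = p ∧ ConjClasses.mk u = c₀ := by
    rintro c₀ ⟨g₀, rfl, hg₀⟩
    have hpg : IsPGroup p (Subgroup.zpowers g₀) := by
      apply IsPGroup.of_card
      rw [Nat.card_zpowers, hg₀, pow_one]
    obtain ⟨Q, hQ⟩ := hpg.exists_le_sylow
    obtain ⟨g, hg⟩ := MulAction.exists_smul_eq G Q U
    have hmem : g * g₀ * g⁻¹ ∈ (U : Subgroup G) := by
      have h1 : g₀ ∈ (Q : Subgroup G) := hQ (Subgroup.mem_zpowers g₀)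
      have h2 : ((g • Q : Sylow p G) : Subgroup G) = (U : Subgroup G) := by rw [hg]
      rw [← h2]
      rw [Sylow.smul_def, Sylow.pointwise_smul_def]
      simpa [MulAut.conj_apply] using Subgroup.smul_mem_pointwise_smul g₀ (MulAut.conj g) _ h1
    refine ⟨g * g₀ * g⁻¹, hmem, ?_, ?_⟩
    · rw [aux_orderOf_mk_eq
        ((ConjClasses.mk_eq_mk_iff_isConj.mpr (isConj_iff.mpr ⟨g, rfl⟩)).symm), hg₀]
    · exact ConjClasses.mk_eq_mk_iff_isConj.mpr (isConj_iff.mpr ⟨g, rfl⟩).symm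
  obtain ⟨u₀, hu₀U, hu₀p, hu₀c⟩ := hrep c hc
  set C := {c : ConjClasses G // ∃ g : G, c = ConjClasses.mk g ∧ orderOf g = p} with hCdef
  choose rep repU repP repC using fun c₀ : C => hrep c₀.1 c₀.2
  set S := {g : G // g ∈ (U : Subgroup G) ∧ g ≠ 1} with hSdef
  have forder : ∀ g : S, orderOf g.1 = p := fun g => aux_orderOf_eq_p hU g.2.1 g.2.2
  let f : S → C := fun g => ⟨ConjClasses.mk g.1, g.1, rfl, forder g⟩
  -- card S = p - 1
  have cardS : Nat.card S = p - 1 := by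
    have eS : S ≃ {x : U // ¬ (x = 1)} :=
      { toFun := fun g => ⟨⟨g.1, g.2.1⟩, fun h => g.2.2 (congrArg Subtype.val h)⟩
        invFun := fun x => ⟨x.1.1, x.1.2, fun h => x.2 (Subtype.ext h)⟩
        left_inv := fun g => rfl
        right_inv := fun x => rfl }
    rw [Nat.card_congr eS, Nat.card_eq_fintype_card, Fintype.card_subtype_compl,
      Fintype.card_subtype_eq, ← Nat.card_eq_fintype_card]
    show Nat.card ((U : Subgroup G)) - 1 = p - 1
    rw [hU]
  -- each fiber of f is equinumerous with the target set
  have key : ∀ c₀ : C, Nat.card {g : S // f g = c₀} =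
      Nat.card {g : G // g ∈ (U : Subgroup G) ∧ ConjClasses.mk g = c} := by
    intro c₀
    have e1 : {g : S // f g = c₀} ≃
        {g : G // g ∈ (U : Subgroup G) ∧ ConjClasses.mk g = ConjClasses.mk (rep c₀)} :=
      { toFun := fun g => ⟨g.1.1, g.1.2.1, by
          have : ConjClasses.mk g.1.1 = c₀.1 := congrArg Subtype.val g.2
          rw [this, repC c₀]⟩
        invFun := fun g => ⟨⟨g.1, g.2.1, by
          intro h
          have ho := aux_orderOf_mk_eq g.2.2
          rw [repP c₀, h, orderOf_one] at ho
          exact hp.one_lt.ne ho⟩, by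
          apply Subtype.ext
          show ConjClasses.mk g.1 = c₀.1
          rw [g.2.2, repC c₀]⟩
        left_inv := fun g => rfl
        right_inv := fun g => rfl }
    have e2 := fibEquiv U hU (repU c₀) (repP c₀) hu₀U hu₀p
    rw [Nat.card_congr (e1.trans e2), hu₀c]
  -- sigma decomposition
  have hsum : Nat.card S = n * Nat.card {g : G // g ∈ (U : Subgroup G) ∧ ConjClasses.mk g = c} := by
    rw [← Nat.card_congr (Equiv.sigmaFiberEquiv f), Nat.card_eq_fintype_card,
      Fintype.card_sigma]
    calc ∑ c₀ : C, Fintype.card {g : S // f g = c₀}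
        = ∑ _c₀ : C, Nat.card {g : G // g ∈ (U : Subgroup G) ∧ ConjClasses.mk g = c} := by
          refine Finset.sum_congr rfl fun c₀ _ => ?_
          rw [← Nat.card_eq_fintype_card, key c₀]
      _ = Fintype.card C * Nat.card {g : G // g ∈ (U : Subgroup G) ∧ ConjClasses.mk g = c} := by
          rw [Finset.sum_const, Finset.card_univ, smul_eq_mul]
      _ = n * _ := by rw [← Nat.card_eq_fintype_card, hn]
  have hnpos : 0 < n := by
    rw [← hn]
    have : Nonempty C := ⟨⟨c, hc⟩⟩
    exact Nat.card_pos
  rw [cardS] at hsum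
  rw [hsum, Nat.mul_div_cancel_left _ hnpos]
end

section
/- Let G be a finite group and p a prime such that every Sylow p-subgroup of G is cyclic of order p. If U is a Sylow p-subgroup of G, then the number of G-conjugacy classes of elements of order p in G equals (p-1)/|N_G(U)/C_G(U)|, and in particular |N_G(U)/C_G(U)| divides p-1. -/
open Subgroup MulAction

section
variable {G : Type*} [Group G] [Finite G] {p : ℕ} [Fact p.Prime]

theorem ord_eq (U : Sylow p G) (hU : Nat.card U = p) (u : U) (hu : u ≠ 1) :
    orderOf (u : G) = p := by
  have h1 : orderOf u ∣ p := by
    have h2 : orderOf u ∣ Nat.card (U : Subgroup G) := orderOf_dvd_natCard u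
    rwa [hU] at h2
  have := (Nat.Prime.eq_one_or_self_of_dvd (Fact.out) _ h1).resolve_left
    (by simpa [orderOf_eq_one_iff] using hu)
  rw [← orderOf_submonoid u] at this
  exact this

theorem zpowers_eq (U : Sylow p G) (hU : Nat.card U = p) (u : U) (hu : u ≠ 1) :
    Subgroup.zpowers (u : G) = (U : Subgroup G) := by
  apply Subgroup.eq_of_le_of_card_ge
  · simpa [Subgroup.zpowers_le] using u.2
  · rw [Nat.card_zpowers, ord_eq U hU u hu, hU]
end

section
variable {G : Type*} [Group G] [Finite G] {p : ℕ} [Fact p.Prime]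

variable (U : Sylow p G)

/-- nontrivial elements of U -/
abbrev NCOP.S := {u : (U : Subgroup G) // u ≠ 1}

instance NCOP.actS : MulAction (Subgroup.normalizer ((U : Subgroup G) : Set G)) (NCOP.S U) where
  smul n u := ⟨n • u.1, fun h => u.2 (by
    have h1 : n • u.1 = n • (1 : (U : Subgroup G)) := by rw [h, smul_one]
    exact smul_left_cancel n h1)⟩
  one_smul u := Subtype.ext (one_smul _ _)
  mul_smul n m u := Subtype.ext (mul_smul n m u.1)

theorem NCOP.smul_coe (n : (Subgroup.normalizer ((U : Subgroup G) : Set G))) (u : NCOP.S U) :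
    ((n • u).1 : G) = n * u.1 * (n : G)⁻¹ := rfl

theorem NCOP.stab (hU : Nat.card U = p) (u : NCOP.S U) :
    MulAction.stabilizer (Subgroup.normalizer ((U : Subgroup G) : Set G)) u
      = (Subgroup.centralizer ((U : Subgroup G) : Set G)).subgroupOf
          (Subgroup.normalizer ((U : Subgroup G) : Set G)) := by
  ext n
  simp only [MulAction.mem_stabilizer_iff, Subgroup.mem_subgroupOf,
    Subgroup.mem_centralizer_iff]
  constructor
  · intro h x hx
    have hx' : x ∈ Subgroup.zpowers (u.1 : G) := by
      rw [zpowers_eq U hU u.1 u.2]; exact hx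
    obtain ⟨k, rfl⟩ := hx'
    have h1 : (n : G) * u.1 * (n : G)⁻¹ = u.1 :=
      congrArg (fun v : NCOP.S U => (v.1 : G)) h
    rw [mul_inv_eq_iff_eq_mul] at h1
    have hcomm : Commute (n : G) (u.1 : G) := h1
    exact (hcomm.zpow_right k).symm.eq
  · intro h
    apply Subtype.ext
    apply Subtype.ext
    rw [NCOP.smul_coe]
    have h2 := h (u.1 : G) u.1.2
    rw [← h2, mul_inv_cancel_right]

end

section
variable {G : Type*} [Group G] [Finite G] {p : ℕ} [Fact p.Prime] (U : Sylow p G)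

theorem NCOP.mem_normalizer_of_conj (hU : Nat.card U = p) {u v : NCOP.S U} {c : G}
    (hc : c * u.1 * c⁻¹ = v.1) : c ∈ (Subgroup.normalizer ((U : Subgroup G) : Set G)) := by
  have hmap : (Subgroup.zpowers (u.1 : G)).map (MulAut.conj c).toMonoidHom
      = Subgroup.zpowers (v.1 : G) := by
    rw [MonoidHom.map_zpowers]
    simp only [MulEquiv.coe_toMonoidHom, MulAut.conj_apply]
    rw [hc]
  rw [zpowers_eq U hU u.1 u.2, zpowers_eq U hU v.1 v.2] at hmap
  rw [Subgroup.mem_normalizer_iff]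
  intro h
  constructor
  · intro hh
    rw [← hmap]
    exact ⟨h, hh, rfl⟩
  · intro hh
    rw [← hmap] at hh
    obtain ⟨y, hy, hy2⟩ := hh
    have : y = h := by
      have : c * y * c⁻¹ = c * h * c⁻¹ := hy2
      exact mul_left_cancel (mul_right_cancel this)
    rwa [← this]

def NCOP.f (hU : Nat.card U = p) :
    MulAction.orbitRel.Quotient (Subgroup.normalizer ((U : Subgroup G) : Set G)) (NCOP.S U) →
    {c : ConjClasses G // ∃ g : G, c = ConjClasses.mk g ∧ orderOf g = p} :=
  Quotient.lift
    (fun u : NCOP.S U => ⟨ConjClasses.mk (u.1 : G), u.1, rfl, ord_eq U hU u.1 u.2⟩)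
    (by
      rintro a b ⟨n, hn⟩
      apply Subtype.ext
      dsimp only
      have : (n : G) * b.1 * (n : G)⁻¹ = (a.1 : G) :=
        congrArg (fun v : NCOP.S U => (v.1 : G)) hn
      exact (ConjClasses.mk_eq_mk_iff_isConj.mpr (isConj_iff.mpr ⟨(n : G), this⟩)).symm)

theorem NCOP.f_bij (hU : Nat.card U = p) : Function.Bijective (NCOP.f U hU) := by
  constructor
  · rintro ⟨a⟩ ⟨b⟩ hab
    have h1 : ConjClasses.mk (a.1 : G) = ConjClasses.mk (b.1 : G) :=
      congrArg Subtype.val hab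
    rw [ConjClasses.mk_eq_mk_iff_isConj] at h1
    obtain ⟨c, hc'⟩ := isConj_iff.mp h1.symm
    have hcn : (c : G) ∈ (Subgroup.normalizer ((U : Subgroup G) : Set G)) :=
      NCOP.mem_normalizer_of_conj U hU hc'
    apply Quotient.sound
    exact ⟨⟨c, hcn⟩, Subtype.ext (Subtype.ext hc')⟩
  · rintro ⟨c, g, rfl, hg⟩
    have hP : IsPGroup p (Subgroup.zpowers g) := by
      apply IsPGroup.of_card (n := 1)
      rw [Nat.card_zpowers, hg, pow_one]
    obtain ⟨Q, hQ⟩ := hP.exists_le_sylow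
    obtain ⟨x, hx⟩ := MulAction.exists_smul_eq G Q U
    have hgQ : g ∈ (Q : Subgroup G) := hQ (Subgroup.mem_zpowers g)
    have hmem : x * g * x⁻¹ ∈ (U : Subgroup G) := by
      rw [← hx, Sylow.coe_subgroup_smul]
      exact ⟨g, hgQ, rfl⟩
    have hne : (⟨x * g * x⁻¹, hmem⟩ : (U : Subgroup G)) ≠ 1 := by
      intro h
      have : x * g * x⁻¹ = 1 := congrArg Subtype.val h
      have hg1 : g = 1 := by
        have := congrArg (fun y => x⁻¹ * y * x) this
        simpa [mul_assoc] using this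
      rw [hg1, orderOf_one] at hg
      exact (Fact.out : p.Prime).one_lt.ne' hg.symm
    refine ⟨Quotient.mk _ (⟨⟨x * g * x⁻¹, hmem⟩, hne⟩ : NCOP.S U), ?_⟩
    apply Subtype.ext
    show ConjClasses.mk (x * g * x⁻¹) = ConjClasses.mk g
    rw [ConjClasses.mk_eq_mk_iff_isConj]
    exact isConj_iff.mpr ⟨x⁻¹, by group⟩

end

open MulAction

theorem num_conjClasses_of_order_p (G : Type*) [Group G] [Finite G] (p : ℕ) [Fact p.Prime]
    (hSyl : ∀ Q : Sylow p G, Nat.card Q = p) (U : Sylow p G) :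
    Nat.card {c : ConjClasses G // ∃ g : G, c = ConjClasses.mk g ∧ orderOf g = p} =
      (p - 1) / (Subgroup.centralizer ((U : Subgroup G) : Set G)).relIndex
        (Subgroup.normalizer ((U : Subgroup G) : Set G)) ∧
    (Subgroup.centralizer ((U : Subgroup G) : Set G)).relIndex
        (Subgroup.normalizer ((U : Subgroup G) : Set G)) ∣ p - 1 := by
  classical
  have hU : Nat.card U = p := hSyl U
  set N := (Subgroup.normalizer ((U : Subgroup G) : Set G)) with hN
  set C := Subgroup.centralizer ((U : Subgroup G) : Set G) with hC
  have hk0 : C.relIndex N ≠ 0 :=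
    show (C.subgroupOf N).index ≠ 0 from Subgroup.index_ne_zero_of_finite
  haveI : Fintype (U : Subgroup G) := Fintype.ofFinite _
  have hS : Nat.card (NCOP.S U) = p - 1 := by
    rw [Nat.card_eq_fintype_card]
    have : Fintype.card {u : (U : Subgroup G) // ¬ u = 1} =
        Fintype.card (U : Subgroup G) - Fintype.card {u : (U : Subgroup G) // u = 1} :=
      Fintype.card_subtype_compl _
    rw [show Fintype.card (NCOP.S U) = Fintype.card {u : (U : Subgroup G) // ¬ u = 1}
      from rfl, this, Fintype.card_subtype_eq (1 : (U : Subgroup G)),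
      ← Nat.card_eq_fintype_card]
    have hU' : Nat.card ((U : Subgroup G) : Type _) = p := hU
    rw [hU']
  have horb : ∀ s : NCOP.S U, Nat.card (orbit N s) = C.relIndex N := by
    intro s
    have h1 := MulAction.index_stabilizer N s
    rw [NCOP.stab U hU s] at h1
    rw [Nat.card_coe_set_eq, ← h1]
    rfl
  have hsum : Nat.card (NCOP.S U) =
      Nat.card (orbitRel.Quotient N (NCOP.S U)) * C.relIndex N := by
    haveI : Fintype (NCOP.S U) := Fintype.ofFinite _
    rw [Nat.card_eq_fintype_card,
      Fintype.card_congr (selfEquivSigmaOrbits N (NCOP.S U)), Fintype.card_sigma,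
      Nat.card_eq_fintype_card]
    rw [Finset.sum_congr rfl (fun ω _ => by
      rw [← Nat.card_eq_fintype_card, horb ω.out] : ∀ _ ∈ _, _ = C.relIndex N)]
    rw [Finset.sum_const, Finset.card_univ, smul_eq_mul]
  have hQ : Nat.card (orbitRel.Quotient N (NCOP.S U)) =
      Nat.card {c : ConjClasses G // ∃ g : G, c = ConjClasses.mk g ∧ orderOf g = p} :=
    Nat.card_congr (Equiv.ofBijective _ (NCOP.f_bij U hU))
  have key : p - 1 =
      Nat.card {c : ConjClasses G // ∃ g : G, c = ConjClasses.mk g ∧ orderOf g = p} *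
        C.relIndex N := by
    rw [← hS, hsum, hQ]
  constructor
  · rw [key, Nat.mul_div_cancel _ (Nat.pos_of_ne_zero hk0)]
  · exact ⟨_, key.trans (mul_comm _ _)⟩
end
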